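/- Let A and B be elements of PSL₂(ℝ) that are hyperbolic (loxodromic), with attracting/repelling fixed points (a⁺, a⁻) and (b⁺, b⁻) in P¹(ℝ). If the sextuple (a⁺, b⁻, a⁻, b⁺, B(a⁺), A(b⁺)) is cyclically ordered on P¹(ℝ), then 1/p(B) + 1/p(A) < 1, where p(g) denotes the period of g with respect to the projective cross-ratio, i.e., p(g) = λ⁺(g)/λ⁻(g) the ratio of the eigenvalues of a lift of g of larger and smaller absolute value. -/
import Mathlib


/-- Determinant of two vectors of ℝ², viewed as homogeneous coordinates on `P¹(ℝ)`. -/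
def det2 (v w : Fin 2 → ℝ) : ℝ :=
  v 0 * w 1 - v 1 * w 0

/-- `(a, b, c)` appear in this (positive) cyclic order on `P¹(ℝ)`. -/
def CyclicPos3 (a b c : Fin 2 → ℝ) : Prop :=
  0 < det2 a b * det2 b c * det2 c a

set_option maxHeartbeats 1600000 in
/-- **Collar lemma in `PSL₂(ℝ)`**. Let `A`, `B` be hyperbolic (loxodromic)
elements of `(P)SL₂(ℝ)`, given by lifts in `SL₂(ℝ)` with eigenvalues
`α, α⁻¹` resp. `β, β⁻¹`, `|α| > 1 < |β|`, acting on `P¹(ℝ)` by Möbius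
transformations. The attracting/repelling fixed points `(a⁺, a⁻)` and
`(b⁺, b⁻)` are represented by the eigenvectors `va⁺, va⁻, vb⁺, vb⁻`.
If the sextuple `(a⁺, b⁻, a⁻, b⁺, B(a⁺), A(b⁺))` is cyclically ordered on
`P¹(ℝ)` (every subtriple taken in this order is positively cyclically
ordered), then `1/p(B) + 1/p(A) < 1`, where the period is
`p(A) = α² = λ⁺(A)/λ⁻(A)`, the ratio of the eigenvalues of larger and smaller
absolute value. -/
theorem collar_lemma_PSL2
    (A B : Matrix.SpecialLinearGroup (Fin 2) ℝ)
    (vap vam vbp vbm : Fin 2 → ℝ)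
    (hvap : vap ≠ 0) (hvam : vam ≠ 0) (hvbp : vbp ≠ 0) (hvbm : vbm ≠ 0)
    (α β : ℝ) (hα : 1 < |α|) (hβ : 1 < |β|)
    (hAp : (A : Matrix (Fin 2) (Fin 2) ℝ).mulVec vap = α • vap)
    (hAm : (A : Matrix (Fin 2) (Fin 2) ℝ).mulVec vam = α⁻¹ • vam)
    (hBp : (B : Matrix (Fin 2) (Fin 2) ℝ).mulVec vbp = β • vbp)
    (hBm : (B : Matrix (Fin 2) (Fin 2) ℝ).mulVec vbm = β⁻¹ • vbm)
    (hcyc : ∀ i j k : Fin 6, i < j → j < k →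
      CyclicPos3
        (![vap, vbm, vam, vbp,
            (B : Matrix (Fin 2) (Fin 2) ℝ).mulVec vap,
            (A : Matrix (Fin 2) (Fin 2) ℝ).mulVec vbp] i)
        (![vap, vbm, vam, vbp,
            (B : Matrix (Fin 2) (Fin 2) ℝ).mulVec vap,
            (A : Matrix (Fin 2) (Fin 2) ℝ).mulVec vbp] j)
        (![vap, vbm, vam, vbp,
            (B : Matrix (Fin 2) (Fin 2) ℝ).mulVec vap,
            (A : Matrix (Fin 2) (Fin 2) ℝ).mulVec vbp] k)) :
    1 / β ^ 2 + 1 / α ^ 2 < 1 := by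
  classical
  set M : Matrix (Fin 2) (Fin 2) ℝ := (A : Matrix (Fin 2) (Fin 2) ℝ) with hM
  set N : Matrix (Fin 2) (Fin 2) ℝ := (B : Matrix (Fin 2) (Fin 2) ℝ) with hN
  -- basic nonvanishing of α, β
  have hα0 : α ≠ 0 := by intro h; rw [h] at hα; simp at hα; linarith
  have hβ0 : β ≠ 0 := by intro h; rw [h] at hβ; simp at hβ; linarith
  have hα2 : 1 < α ^ 2 := by
    have := sq_abs α; nlinarith [hα, abs_nonneg α]
  have hβ2 : 1 < β ^ 2 := by
    have := sq_abs β; nlinarith [hβ, abs_nonneg β]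
  -- extract the three cyclic-order conditions we need
  have h012 : 0 < det2 vap vbm * det2 vbm vam * det2 vam vap := by
    have h := hcyc 0 1 2 (by decide) (by decide)
    simpa [CyclicPos3] using h
  have h023 : 0 < det2 vap vam * det2 vam vbp * det2 vbp vap := by
    have h := hcyc 0 2 3 (by decide) (by decide)
    simpa [CyclicPos3] using h
  have h045 : 0 < det2 vap (N.mulVec vap) * det2 (N.mulVec vap) (M.mulVec vbp)
      * det2 (M.mulVec vbp) vap := by
    have h := hcyc 0 4 5 (by decide) (by decide)
    simpa [CyclicPos3] using h
  have h135 : 0 < det2 vbm vbp * det2 vbp (M.mulVec vbp) * det2 (M.mulVec vbp) vbm := by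
    have h := hcyc 1 3 5 (by decide) (by decide)
    simpa [CyclicPos3] using h
  -- names for the determinants among the four eigenvectors
  set a1 : ℝ := det2 vap vbm with ha1
  set a2 : ℝ := det2 vap vam with ha2
  set a3 : ℝ := det2 vap vbp with ha3
  set a4 : ℝ := det2 vbm vam with ha4
  set a6 : ℝ := det2 vam vbp with ha6
  set Db : ℝ := det2 vbp vbm with hDb
  -- antisymmetry facts
  have hsym : ∀ u v : Fin 2 → ℝ, det2 u v = -det2 v u := by
    intro u v; simp [det2]; ring
  -- bilinearity of det2
  have det2_smul_left : ∀ (c : ℝ) (u v : Fin 2 → ℝ), det2 (c • u) v = c * det2 u v := by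
    intro c u v; simp [det2]; ring
  have det2_smul_right : ∀ (c : ℝ) (u v : Fin 2 → ℝ), det2 u (c • v) = c * det2 u v := by
    intro c u v; simp [det2]; ring
  have det2_add_left : ∀ (u v w : Fin 2 → ℝ), det2 (u + v) w = det2 u w + det2 v w := by
    intro u v w; simp [det2]; ring
  have det2_add_right : ∀ (u v w : Fin 2 → ℝ), det2 u (v + w) = det2 u v + det2 u w := by
    intro u v w; simp [det2]; ring
  -- SL2 equivariance
  have det2_mulVec : ∀ (P : Matrix (Fin 2) (Fin 2) ℝ) (u v : Fin 2 → ℝ),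
      det2 (P.mulVec u) (P.mulVec v) = P.det * det2 u v := by
    intro P u v
    simp [det2, Matrix.mulVec, dotProduct, Fin.sum_univ_two, Matrix.det_fin_two]
    ring
  -- Cramer decompositions (componentwise polynomial identity)
  have cramer : ∀ (u v w : Fin 2 → ℝ),
      (det2 u v) • w = (det2 w v) • u + (det2 u w) • v := by
    intro u v w
    funext i
    fin_cases i <;> · simp [det2]; ring
  -- decomposition of A·vbp in the eigenbasis of A
  have hAvbp : a2 • (M.mulVec vbp)
      = (det2 vbp vam * α) • vap + (a3 * α⁻¹) • vam := by
    have h1 : M.mulVec (a2 • vbp) = a2 • M.mulVec vbp := by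
      rw [Matrix.mulVec_smul]
    rw [← h1, cramer vap vam vbp, Matrix.mulVec_add, Matrix.mulVec_smul, Matrix.mulVec_smul,
      hAp, hAm, smul_smul, smul_smul]
  -- decomposition of B·vap in the eigenbasis of B
  have hBvap : Db • (N.mulVec vap)
      = (det2 vap vbm * β) • vbp + (det2 vbp vap * β⁻¹) • vbm := by
    have h1 : N.mulVec (Db • vap) = Db • N.mulVec vap := by
      rw [Matrix.mulVec_smul]
    rw [← h1, cramer vbp vbm vap, Matrix.mulVec_add, Matrix.mulVec_smul, Matrix.mulVec_smul,
      hBp, hBm, smul_smul, smul_smul]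
  -- E1 : Db * det2 vap (B vap)
  have E1 : Db * det2 vap (N.mulVec vap)
      = a1 * β * a3 + (det2 vbp vap) * β⁻¹ * a1 := by
    rw [← det2_smul_right, hBvap, det2_add_right, det2_smul_right, det2_smul_right, ha1, ha3]
  -- E3 : α * det2 (A vbp) vap = det2 vbp vap
  have E3 : α * det2 (M.mulVec vbp) vap = det2 vbp vap := by
    have h1 : det2 (M.mulVec vbp) (M.mulVec vap) = det2 vbp vap := by
      rw [det2_mulVec]; rw [hM]; rw [A.prop]; ring
    rw [hAp, det2_smul_right] at h1
    exact h1
  -- E2 : (Db * a2) * det2 (B vap) (A vbp)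
  have E2 : Db * a2 * det2 (N.mulVec vap) (M.mulVec vbp)
      = (det2 vap vbm * β) * ((det2 vbp vam * α) * det2 vbp vap
          + (a3 * α⁻¹) * det2 vbp vam)
        + (det2 vbp vap * β⁻¹) * ((det2 vbp vam * α) * det2 vbm vap
          + (a3 * α⁻¹) * det2 vbm vam) := by
    have h1 : det2 (Db • (N.mulVec vap)) (a2 • (M.mulVec vbp))
        = Db * (a2 * det2 (N.mulVec vap) (M.mulVec vbp)) := by
      rw [det2_smul_left, det2_smul_right]
    rw [hBvap, hAvbp] at h1
    rw [det2_add_left, det2_add_right, det2_add_right] at h1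
    simp only [det2_smul_left, det2_smul_right] at h1
    rw [mul_assoc]
    rw [← h1]
    ring
  -- nonvanishing of a2, Db, a3, a1
  have hDb0 : Db ≠ 0 := by
    intro h
    rw [hsym vbm vbp, ← hDb, h] at h135
    simp at h135
  have ha20 : a2 ≠ 0 := by
    intro h
    rw [hsym vam vap, ← ha2, h] at h012
    simp at h012
  -- the key product
  set X1 : ℝ := det2 vap (N.mulVec vap) with hX1
  set X2 : ℝ := det2 (N.mulVec vap) (M.mulVec vbp) with hX2
  set X3 : ℝ := det2 (M.mulVec vbp) vap with hX3
  set K : ℝ := α ^ 2 * β ^ 2 - α ^ 2 - β ^ 2 with hK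
  have hsym3 : det2 vbp vap = -a3 := by rw [hsym vbp vap, ha3]
  have hsym6 : det2 vbp vam = -a6 := by rw [hsym vbp vam]
  have hsym1 : det2 vbm vap = -a1 := by rw [hsym vbm vap]
  have hPpos : 0 < ((Db * X1) * β) * (((Db * a2) * X2) * (α * β)) * (α * X3) * a2 := by
    have hsq : 0 < Db ^ 2 * a2 ^ 2 * α ^ 2 * β ^ 2 := by positivity
    have h := mul_pos hsq h045
    calc (0:ℝ) < Db ^ 2 * a2 ^ 2 * α ^ 2 * β ^ 2 * (X1 * X2 * X3) := h
    _ = ((Db * X1) * β) * (((Db * a2) * X2) * (α * β)) * (α * X3) * a2 := by ring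
  have hPQ : ((Db * X1) * β) * (((Db * a2) * X2) * (α * β)) * (α * X3) * a2
      = (β ^ 2 - 1) * ((a1 * a3) * (a1 * a3 * a6 * K - a3 ^ 2 * a4) * (-a3) * a2) := by
    rw [E1, mul_assoc Db a2 X2, ← mul_assoc Db a2, E2, E3]
    rw [hsym3, hsym6, hsym1, hK, ha4]
    field_simp
    ring
  rw [hPQ] at hPpos
  have hb1 : 0 < β ^ 2 - 1 := by linarith
  have hQpos : 0 < (a1 * a3) * (a1 * a3 * a6 * K - a3 ^ 2 * a4) * (-a3) * a2 := by
    by_contra hcon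
    push_neg at hcon
    have hmm : 0 ≤ (β ^ 2 - 1) * (-((a1 * a3) * (a1 * a3 * a6 * K - a3 ^ 2 * a4) * (-a3) * a2)) :=
      mul_nonneg hb1.le (neg_nonneg.mpr hcon)
    rw [hK] at hPpos hmm
    linarith [hPpos, hmm]
  -- the two order conditions
  have H1 : a1 * a2 * a4 < 0 := by
    rw [hsym vam vap, ← ha2] at h012
    linarith [h012]
  have H2 : a2 * a3 * a6 < 0 := by
    rw [hsym vbp vap, ← ha3] at h023
    linarith [h023]
  -- conclude K > 0
  have hKpos : 0 < K := by
    by_contra hcon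
    push_neg at hcon
    have t1 : 0 ≤ (a1 * a3) ^ 2 * (-(a2 * a3 * a6)) * (-K) := by
      have := sq_nonneg (a1 * a3)
      have h6 : 0 ≤ -(a2 * a3 * a6) := by linarith
      have hk' : 0 ≤ -K := by linarith
      positivity
    have t2 : a1 * a2 * a4 * a3 ^ 4 ≤ 0 := by
      have h34 : 0 ≤ a3 ^ 4 := by positivity
      exact mul_nonpos_of_nonpos_of_nonneg (le_of_lt H1) h34
    rw [hK] at t1 hQpos
    linarith [t1, t2, hQpos]
  -- finish
  rw [div_add_div _ _ (pow_ne_zero 2 hβ0) (pow_ne_zero 2 hα0),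
    div_lt_one (by positivity)]
  rw [hK] at hKpos
  nlinarith [hKpos]
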